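/- The unique STS(9) admits a strict 3-bicoloring with class sizes (1,4,4): there is a coloring of its 9 points with 3 colors, with class sizes 1, 4, 4, such that every triple receives exactly two colors. -/

import Mathlib

open Finset

def isSTS {α : Type*} [DecidableEq α] (V : Finset α) (B : Finset (Finset α)) : Prop :=
  (∀ T ∈ B, T ⊆ V ∧ T.card = 3) ∧
  ∀ p : Finset α, p ⊆ V → p.card = 2 → ∃! T, T ∈ B ∧ p ⊆ T

def isOneFactorization {α : Type*} [DecidableEq α] {v : ℕ}
    (X : Finset α) (F : Fin v → Finset (Finset α)) : Prop :=
  (∀ i, ∀ e ∈ F i, e ⊆ X ∧ e.card = 2) ∧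
  (∀ i, ∀ x ∈ X, ∃! e, e ∈ F i ∧ x ∈ e) ∧
  (∀ e : Finset α, e ⊆ X → e.card = 2 → ∃! i, e ∈ F i)

def doublingBlocks {α : Type*} [DecidableEq α] {v : ℕ}
    (a : Fin v → α) (F : Fin v → Finset (Finset α)) : Finset (Finset α) :=
  Finset.univ.biUnion fun i => (F i).image fun e => insert (a i) e

def isStrictBicoloring {α : Type*} [DecidableEq α] {k : ℕ}
    (V : Finset α) (B : Finset (Finset α)) (φ : α → Fin k) : Prop :=
  (∀ T ∈ B, (T.image φ).card = 2) ∧ ∀ i : Fin k, ∃ x ∈ V, φ x = i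

theorem stmt_12 {α : Type*} [DecidableEq α]
    (V : Finset α) (B : Finset (Finset α)) (hV : V.card = 9) (hSTS : isSTS V B) :
    ∃ φ : α → Fin 3, isStrictBicoloring V B φ ∧
      (V.filter fun x => φ x = 0).card = 1 ∧
      (V.filter fun x => φ x = 1).card = 4 ∧
      (V.filter fun x => φ x = 2).card = 4 := by
  obtain ⟨hB, hpair⟩ := hSTS
  -- uniqueness: two blocks sharing two points are equal
  have huniq : ∀ T₁ ∈ B, ∀ T₂ ∈ B, ∀ x y : α, x ≠ y →
      x ∈ T₁ → y ∈ T₁ → x ∈ T₂ → y ∈ T₂ → T₁ = T₂ := by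
    intro T₁ h₁ T₂ h₂ x y hxy hx1 hy1 hx2 hy2
    have hsub : ({x, y} : Finset α) ⊆ V := by
      intro z hz
      simp only [mem_insert, mem_singleton] at hz
      rcases hz with rfl | rfl
      · exact (hB T₁ h₁).1 hx1
      · exact (hB T₁ h₁).1 hy1
    obtain ⟨T, _, hun⟩ := hpair _ hsub (card_pair hxy)
    have e1 := hun T₁ ⟨h₁, by intro z hz; simp only [mem_insert, mem_singleton] at hz; rcases hz with rfl|rfl <;> assumption⟩
    have e2 := hun T₂ ⟨h₂, by intro z hz; simp only [mem_insert, mem_singleton] at hz; rcases hz with rfl|rfl <;> assumption⟩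
    rw [e1, e2]
  have hV0 : V.Nonempty := by rw [← card_pos, hV]; norm_num
  obtain ⟨p, hp⟩ := hV0
  set P : Finset (Finset α) := B.filter (fun T => p ∈ T) with hPdef
  -- every x ∈ V, x ≠ p lies in a unique block through p
  have hclass : ∀ x ∈ V, x ≠ p → ∃! T, T ∈ P ∧ x ∈ T := by
    intro x hx hxp
    have hsub : ({p, x} : Finset α) ⊆ V := by
      intro z hz; simp only [mem_insert, mem_singleton] at hz
      rcases hz with rfl | rfl <;> assumption
    obtain ⟨T, ⟨hTB, hTsub⟩, hun⟩ := hpair _ hsub (card_pair (Ne.symm hxp))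
    refine ⟨T, ⟨?_, ?_⟩, ?_⟩
    · simp only [hPdef, mem_filter]
      exact ⟨hTB, hTsub (by simp)⟩
    · exact hTsub (by simp)
    · intro T' ⟨hT'P, hxT'⟩
      simp only [hPdef, mem_filter] at hT'P
      exact hun T' ⟨hT'P.1, by intro z hz; simp only [mem_insert, mem_singleton] at hz; rcases hz with rfl|rfl; exacts [hT'P.2, hxT']⟩
  -- pairwise disjointness of erased blocks through p
  have hdisj : ∀ T₁ ∈ P, ∀ T₂ ∈ P, T₁ ≠ T₂ → Disjoint (T₁.erase p) (T₂.erase p) := by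
    intro T₁ h₁ T₂ h₂ hne
    simp only [hPdef, mem_filter] at h₁ h₂
    rw [disjoint_left]
    intro z hz1 hz2
    exact hne (huniq T₁ h₁.1 T₂ h₂.1 p z (fun h => (mem_erase.1 hz1).1 h.symm)
      h₁.2 (mem_erase.1 hz1).2 h₂.2 (mem_erase.1 hz2).2)
  have hcover : V.erase p = P.biUnion (fun T => T.erase p) := by
    ext z
    simp only [mem_biUnion, mem_erase]
    constructor
    · rintro ⟨hzp, hzV⟩
      obtain ⟨T, ⟨hTP, hzT⟩, _⟩ := hclass z hzV hzp
      exact ⟨T, hTP, hzp, hzT⟩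
    · rintro ⟨T, hTP, hzp, hzT⟩
      simp only [hPdef, mem_filter] at hTP
      exact ⟨hzp, (hB T hTP.1).1 hzT⟩
  have herasecard : ∀ T ∈ P, (T.erase p).card = 2 := by
    intro T hT
    simp only [hPdef, mem_filter] at hT
    rw [card_erase_of_mem hT.2, (hB T hT.1).2]
  have hPcard : P.card = 4 := by
    have h8 : (V.erase p).card = 8 := by rw [card_erase_of_mem hp, hV]
    rw [hcover, card_biUnion hdisj] at h8
    rw [Finset.sum_congr rfl herasecard, Finset.sum_const, smul_eq_mul] at h8
    omega
  obtain ⟨S, hSP, hScard⟩ := Finset.exists_subset_card_eq (s := P) (n := 2) (by omega)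
  set A : Finset α := S.biUnion (fun T => T.erase p) with hAdef
  have hApV : A ⊆ V.erase p := by
    rw [hcover]; exact biUnion_subset_biUnion_of_subset_left _ hSP
  have hAcard : A.card = 4 := by
    rw [hAdef, card_biUnion (fun T₁ h₁ T₂ h₂ => hdisj T₁ (hSP h₁) T₂ (hSP h₂)),
      Finset.sum_congr rfl (fun T hT => herasecard T (hSP hT)), Finset.sum_const,
      hScard, smul_eq_mul]
  set φ : α → Fin 3 := fun x => if x = p then 0 else if x ∈ A then 1 else 2 with hφdef
  -- membership in A determined by the class
  have hmemA : ∀ T ∈ P, ∀ x ∈ T.erase p, (x ∈ A ↔ T ∈ S) := by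
    intro T hT x hx
    constructor
    · intro hxA
      rw [hAdef, mem_biUnion] at hxA
      obtain ⟨T', hT'S, hxT'⟩ := hxA
      obtain ⟨C, _, hCun⟩ := hclass x ((hB T (mem_filter.1 hT).1).1 (mem_erase.1 hx).2) (mem_erase.1 hx).1
      have e1 := hCun T ⟨hT, (mem_erase.1 hx).2⟩
      have e2 := hCun T' ⟨hSP hT'S, (mem_erase.1 hxT').2⟩
      rw [e2] at hT'S; rwa [e1]
    · intro hTS
      rw [hAdef, mem_biUnion]
      exact ⟨T, hTS, hx⟩
  -- the class of a point
  have hclassfun : ∀ x ∈ V.erase p, ∃ C, (C ∈ P ∧ x ∈ C) ∧ ∀ C', C' ∈ P → x ∈ C' → C' = C := by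
    intro x hx
    obtain ⟨C, hC, hun⟩ := hclass x (mem_erase.1 hx).2 (mem_erase.1 hx).1
    exact ⟨C, hC, fun C' h1 h2 => hun C' ⟨h1, h2⟩⟩
  choose C hC hCun using hclassfun
  have hC1 : ∀ x (h : x ∈ V.erase p), C x h ∈ P := fun x h => (hC x h).1
  have hC2 : ∀ x (h : x ∈ V.erase p), x ∈ C x h := fun x h => (hC x h).2
  -- main: every block gets exactly 2 colors
  have hmain : ∀ T ∈ B, (T.image φ).card = 2 := by
    intro T hT
    have hT3 := (hB T hT).2
    have hTV := (hB T hT).1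
    by_cases hpT : p ∈ T
    · -- block through p: other two points same color c ≠ 0
      have hTP : T ∈ P := mem_filter.2 ⟨hT, hpT⟩
      have h2 : (T.erase p).card = 2 := herasecard T hTP
      obtain ⟨x, hx⟩ : (T.erase p).Nonempty := by rw [← card_pos, h2]; norm_num
      have hconst : ∀ z ∈ T.erase p, φ z = φ x := by
        intro z hz
        simp only [hφdef]
        rw [if_neg (mem_erase.1 hz).1, if_neg (mem_erase.1 hx).1]
        by_cases hTS : T ∈ S
        · rw [if_pos ((hmemA T hTP z hz).2 hTS), if_pos ((hmemA T hTP x hx).2 hTS)]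
        · rw [if_neg (fun h => hTS ((hmemA T hTP z hz).1 h)),
            if_neg (fun h => hTS ((hmemA T hTP x hx).1 h))]
      have himg : T.image φ = {0, φ x} := by
        have hTi : T = insert p (T.erase p) := (insert_erase hpT).symm
        rw [hTi, image_insert]
        congr 1
        · simp [hφdef]
        apply Finset.Subset.antisymm
        · intro c hc
          rw [mem_image] at hc
          obtain ⟨z, hz, rfl⟩ := hc
          rw [hconst z hz]; exact mem_singleton_self _
        · intro c hc
          rw [mem_singleton] at hc
          rw [hc, mem_image]
          exact ⟨x, hx, rfl⟩
      rw [himg]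
      rw [card_insert_of_notMem, card_singleton]
      rw [mem_singleton]
      simp only [hφdef]
      rw [if_neg (mem_erase.1 hx).1]
      split <;> decide
    · -- block missing p: hits 3 distinct classes, so both colors 1,2 occur
      have hTVp : T ⊆ V.erase p := fun z hz =>
        mem_erase.2 ⟨fun h => hpT (h ▸ hz), hTV hz⟩
      have hCinj : ∀ z₁ h₁ z₂ h₂, C z₁ (hTVp h₁) = C z₂ (hTVp h₂) → z₁ = z₂ := by
        intro z₁ h₁ z₂ h₂ he
        by_contra hne
        have hz1C : z₁ ∈ C z₂ (hTVp h₂) := he ▸ hC2 z₁ (hTVp h₁)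
        have : C z₂ (hTVp h₂) = T := by
          apply huniq _ (mem_filter.1 (hC1 z₂ (hTVp h₂))).1 T hT z₁ z₂ hne hz1C (hC2 z₂ (hTVp h₂)) h₁ h₂
        exact hpT (this ▸ (mem_filter.1 (hC1 z₂ (hTVp h₂))).2)
      -- x with color 1: not all classes avoid S
      have hex1 : ∃ z, ∃ h : z ∈ T, C z (hTVp h) ∈ S := by
        by_contra hno
        push_neg at hno
        -- then C maps T injectively into P \ S, card 2 < 3
        have : T.card ≤ (P \ S).card := by
          apply Finset.card_le_card_of_injOn (fun z => if h : z ∈ T then C z (hTVp h) else ∅)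
          · intro z hz
            simp only [mem_coe] at hz ⊢
            simp only [dif_pos hz]
            exact mem_sdiff.2 ⟨hC1 z (hTVp hz), hno z hz⟩
          · intro z₁ h₁ z₂ h₂ he
            rw [mem_coe] at h₁ h₂
            simp only [dif_pos h₁, dif_pos h₂] at he
            exact hCinj z₁ h₁ z₂ h₂ he
        rw [hT3, card_sdiff_of_subset hSP, hPcard, hScard] at this
        omega
      have hex2 : ∃ z, ∃ h : z ∈ T, C z (hTVp h) ∉ S := by
        by_contra hno
        push_neg at hno
        have : T.card ≤ S.card := by
          apply Finset.card_le_card_of_injOn (fun z => if h : z ∈ T then C z (hTVp h) else ∅)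
          · intro z hz
            simp only [mem_coe] at hz ⊢
            simp only [dif_pos hz]
            exact hno z hz
          · intro z₁ h₁ z₂ h₂ he
            rw [mem_coe] at h₁ h₂
            simp only [dif_pos h₁, dif_pos h₂] at he
            exact hCinj z₁ h₁ z₂ h₂ he
        rw [hT3, hScard] at this
        omega
      obtain ⟨x, hxT, hxS⟩ := hex1
      obtain ⟨y, hyT, hyS⟩ := hex2
      have hxA : x ∈ A := (hmemA _ (hC1 x (hTVp hxT)) x
        (mem_erase.2 ⟨(mem_erase.1 (hTVp hxT)).1, hC2 x (hTVp hxT)⟩)).2 hxS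
      have hyA : y ∉ A := fun h => hyS ((hmemA _ (hC1 y (hTVp hyT)) y
        (mem_erase.2 ⟨(mem_erase.1 (hTVp hyT)).1, hC2 y (hTVp hyT)⟩)).1 h)
      have himg : T.image φ = {1, 2} := by
        apply Finset.Subset.antisymm
        · intro c hc
          rw [mem_image] at hc
          obtain ⟨z, hz, rfl⟩ := hc
          simp only [hφdef]
          rw [if_neg (mem_erase.1 (hTVp hz)).1]
          split <;> simp
        · intro c hc
          rw [mem_insert, mem_singleton] at hc
          rw [mem_image]
          rcases hc with rfl | rfl
          · exact ⟨x, hxT, by simp [hφdef, (mem_erase.1 (hTVp hxT)).1, hxA]⟩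
          · exact ⟨y, hyT, by simp [hφdef, (mem_erase.1 (hTVp hyT)).1, hyA]⟩
      rw [himg]
      decide

  have hsurj : ∀ i : Fin 3, ∃ x ∈ V, φ x = i := by
    intro i
    fin_cases i
    · exact ⟨p, hp, by simp [hφdef]⟩
    · obtain ⟨T, hTS⟩ : S.Nonempty := by rw [← card_pos, hScard]; norm_num
      obtain ⟨x, hx⟩ : (T.erase p).Nonempty := by
        rw [← card_pos, herasecard T (hSP hTS)]; norm_num
      have hxA : x ∈ A := mem_biUnion.2 ⟨T, hTS, hx⟩
      exact ⟨x, (mem_erase.1 (hApV hxA)).2, by simp [hφdef, (mem_erase.1 hx).1, hxA]⟩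
    · obtain ⟨T, hTPS⟩ : (P \ S).Nonempty := by
        rw [← card_pos, card_sdiff_of_subset hSP, hPcard, hScard]; norm_num
      rw [mem_sdiff] at hTPS
      obtain ⟨x, hx⟩ : (T.erase p).Nonempty := by
        rw [← card_pos, herasecard T hTPS.1]; norm_num
      have hxA : x ∉ A := fun h => hTPS.2 ((hmemA T hTPS.1 x hx).1 h)
      have hxV : x ∈ V := (hB T (mem_filter.1 hTPS.1).1).1 (mem_erase.1 hx).2
      exact ⟨x, hxV, by simp [hφdef, (mem_erase.1 hx).1, hxA]⟩
  have f0 : V.filter (fun x => φ x = 0) = {p} := by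
    ext x
    simp only [mem_filter, mem_singleton, hφdef]
    constructor
    · rintro ⟨hxV, hx0⟩
      by_contra hne
      rw [if_neg hne] at hx0
      revert hx0; split <;> decide
    · rintro rfl
      exact ⟨hp, by simp⟩
  have f1 : V.filter (fun x => φ x = 1) = A := by
    ext x
    simp only [mem_filter, hφdef]
    constructor
    · rintro ⟨hxV, hx1⟩
      by_contra hxA
      by_cases hxp : x = p
      · rw [if_pos hxp] at hx1; exact absurd hx1 (by decide)
      · rw [if_neg hxp, if_neg hxA] at hx1; exact absurd hx1 (by decide)
    · intro hxA
      have := hApV hxA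
      exact ⟨(mem_erase.1 this).2, by rw [if_neg (mem_erase.1 this).1, if_pos hxA]⟩
  have f2 : V.filter (fun x => φ x = 2) = (V.erase p) \ A := by
    ext x
    simp only [mem_filter, mem_sdiff, mem_erase, hφdef]
    constructor
    · rintro ⟨hxV, hx2⟩
      by_cases hxp : x = p
      · rw [if_pos hxp] at hx2; exact absurd hx2 (by decide)
      by_cases hxA : x ∈ A
      · rw [if_neg hxp, if_pos hxA] at hx2; exact absurd hx2 (by decide)
      · exact ⟨⟨hxp, hxV⟩, hxA⟩
    · rintro ⟨⟨hxp, hxV⟩, hxA⟩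
      exact ⟨hxV, by rw [if_neg hxp, if_neg hxA]⟩
  refine ⟨φ, ⟨hmain, hsurj⟩, ?_, ?_, ?_⟩
  · rw [f0, card_singleton]
  · rw [f1, hAcard]
  · rw [f2, card_sdiff_of_subset hApV, card_erase_of_mem hp, hV, hAcard]
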